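/- Let P = ⟨p₁, …, p_n⟩ and Q = ⟨q₁, …, q_m⟩ be point sequences in ℝ² and let D′(i, j) = GED(P_i, Q_j) be the geometric edit distance between their prefixes with gap penalty 1. Then for all 1 ≤ i ≤ n and 1 ≤ j ≤ m, 0 ≤ D′(i, j) − D′(i−1, j−1) ≤ 2; in particular, the values along each diagonal of the dynamic programming matrix are non-decreasing. -/

import Mathlib

noncomputable section

/-- Points in the plane with the Euclidean distance. -/
abbrev Pt := EuclideanSpace ℝ (Fin 2)

/-- A monotone matching between index sets `Fin n` and `Fin m`: a set of index pairs with
distinct first indices, distinct second indices, such that first indices and second indices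
are ordered consistently. -/
structure MMatch (n m : ℕ) where
  pairs : Finset (Fin n × Fin m)
  inj1 : ∀ p ∈ pairs, ∀ q ∈ pairs, p.1 = q.1 → p = q
  inj2 : ∀ p ∈ pairs, ∀ q ∈ pairs, p.2 = q.2 → p = q
  mono : ∀ p ∈ pairs, ∀ q ∈ pairs, (p.1 < q.1 ↔ p.2 < q.2)

/-- The number of gap points `|Γ(M)|`: indices of both sequences left unmatched by `M`. -/
def gapCount {n m : ℕ} (M : MMatch n m) : ℕ :=
  (n - M.pairs.card) + (m - M.pairs.card)
/-- The cost `δ(M)` (gap penalty 1) of a matching between the first `n` points of `P` and the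
first `m` points of `Q`. -/
def cost (n m : ℕ) (P Q : ℕ → Pt) (M : MMatch n m) : ℝ :=
  (∑ p ∈ M.pairs, dist (P p.1) (Q p.2)) + (gapCount M : ℝ)

/-- The geometric edit distance between `⟨P 0, …, P (n-1)⟩` and `⟨Q 0, …, Q (m-1)⟩`:
the minimum cost over all monotone matchings. -/
def GED (n m : ℕ) (P Q : ℕ → Pt) : ℝ :=
  sInf {c | ∃ M : MMatch n m, c = cost n m P Q M}

namespace GEDaux

open Finset

lemma card_le_fst {n m : ℕ} (M : MMatch n m) : M.pairs.card ≤ n := by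
  classical
  have h : (M.pairs.image Prod.fst).card = M.pairs.card :=
    Finset.card_image_of_injOn (fun p hp q hq h => M.inj1 p hp q hq h)
  rw [← h]
  simpa using Finset.card_le_univ (M.pairs.image Prod.fst)

lemma card_le_snd {n m : ℕ} (M : MMatch n m) : M.pairs.card ≤ m := by
  classical
  have h : (M.pairs.image Prod.snd).card = M.pairs.card :=
    Finset.card_image_of_injOn (fun p hp q hq h => M.inj2 p hp q hq h)
  rw [← h]
  simpa using Finset.card_le_univ (M.pairs.image Prod.snd)

lemma cost_nonneg (n m : ℕ) (P Q : ℕ → Pt) (M : MMatch n m) : 0 ≤ cost n m P Q M :=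
  add_nonneg (Finset.sum_nonneg fun _ _ => dist_nonneg) (Nat.cast_nonneg _)

def emptyM (n m : ℕ) : MMatch n m :=
  ⟨∅, by simp, by simp, by simp⟩

lemma GED_set_nonempty (n m : ℕ) (P Q : ℕ → Pt) :
    {c | ∃ M : MMatch n m, c = cost n m P Q M}.Nonempty :=
  ⟨cost n m P Q (emptyM n m), emptyM n m, rfl⟩

lemma GED_set_bddBelow (n m : ℕ) (P Q : ℕ → Pt) :
    BddBelow {c | ∃ M : MMatch n m, c = cost n m P Q M} :=
  ⟨0, by rintro c ⟨M, rfl⟩; exact cost_nonneg n m P Q M⟩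

/-- The embedding of index pairs under `castSucc`. -/
def emb (n m : ℕ) : Fin n × Fin m ↪ Fin (n + 1) × Fin (m + 1) :=
  ⟨fun p => (p.1.castSucc, p.2.castSucc), by
    intro p q h
    simp only [Prod.mk.injEq, Fin.castSucc_inj] at h
    exact Prod.ext h.1 h.2⟩

@[simp] lemma emb_apply (n m : ℕ) (a : Fin n × Fin m) :
    emb n m a = (a.1.castSucc, a.2.castSucc) := rfl

/-- Lift a matching to one between the extended sequences. -/
def liftM {n m : ℕ} (M : MMatch n m) : MMatch (n + 1) (m + 1) where
  pairs := M.pairs.map (emb n m)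
  inj1 := by
    intro p hp q hq h
    simp only [Finset.mem_map] at hp hq
    obtain ⟨a, ha, rfl⟩ := hp
    obtain ⟨b, hb, rfl⟩ := hq
    simp only [emb_apply, Fin.castSucc_inj] at h ⊢
    rw [M.inj1 a ha b hb h]
  inj2 := by
    intro p hp q hq h
    simp only [Finset.mem_map] at hp hq
    obtain ⟨a, ha, rfl⟩ := hp
    obtain ⟨b, hb, rfl⟩ := hq
    simp only [emb_apply, Fin.castSucc_inj] at h ⊢
    rw [M.inj2 a ha b hb h]
  mono := by
    intro p hp q hq
    simp only [Finset.mem_map] at hp hq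
    obtain ⟨a, ha, rfl⟩ := hp
    obtain ⟨b, hb, rfl⟩ := hq
    simpa [emb_apply, Fin.castSucc_lt_castSucc_iff] using M.mono a ha b hb

lemma cost_liftM {n m : ℕ} (P Q : ℕ → Pt) (M : MMatch n m) :
    cost (n + 1) (m + 1) P Q (liftM M) = cost n m P Q M + 2 := by
  have hc1 := card_le_fst M
  have hc2 := card_le_snd M
  have hsum : (∑ p ∈ (liftM M).pairs, dist (P p.1) (Q p.2)) =
      (∑ p ∈ M.pairs, dist (P p.1) (Q p.2)) := by
    simp [liftM, Finset.sum_map, emb_apply]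
  have hgap : (gapCount (liftM M) : ℝ) = (gapCount M : ℝ) + 2 := by
    have : gapCount (liftM M) = gapCount M + 2 := by
      simp only [gapCount, liftM, Finset.card_map]
      omega
    rw [this]; push_cast; ring
  simp only [cost, hsum, hgap]; ring

/-- Restrict a matching on the extended sequences to the original ones. -/
def dropM {n m : ℕ} (M : MMatch (n + 1) (m + 1)) : MMatch n m where
  pairs := Finset.univ.filter
    (fun q : Fin n × Fin m => (q.1.castSucc, q.2.castSucc) ∈ M.pairs)
  inj1 := by
    intro p hp q hq h
    simp only [Finset.mem_filter] at hp hq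
    have := M.inj1 _ hp.2 _ hq.2 (by simp [h])
    simp only [Prod.mk.injEq, Fin.castSucc_inj] at this
    exact Prod.ext this.1 this.2
  inj2 := by
    intro p hp q hq h
    simp only [Finset.mem_filter] at hp hq
    have := M.inj2 _ hp.2 _ hq.2 (by simp [h])
    simp only [Prod.mk.injEq, Fin.castSucc_inj] at this
    exact Prod.ext this.1 this.2
  mono := by
    intro p hp q hq
    simp only [Finset.mem_filter] at hp hq
    simpa [Fin.castSucc_lt_castSucc_iff] using M.mono _ hp.2 _ hq.2

lemma dropM_image {n m : ℕ} (M : MMatch (n + 1) (m + 1)) :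
    (dropM M).pairs.image (fun q : Fin n × Fin m => (q.1.castSucc, q.2.castSucc)) =
      M.pairs.filter (fun p => (p.1 : ℕ) < n ∧ (p.2 : ℕ) < m) := by
  ext p
  simp only [Finset.mem_image, Finset.mem_filter, dropM, Finset.mem_univ, true_and]
  constructor
  · rintro ⟨q, hq, rfl⟩
    exact ⟨hq, q.1.isLt, q.2.isLt⟩
  · rintro ⟨hp, h1, h2⟩
    refine ⟨(⟨(p.1 : ℕ), h1⟩, ⟨(p.2 : ℕ), h2⟩), ?_, ?_⟩
    · simpa [Fin.ext_iff] using hp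
    · simp [Fin.ext_iff]

lemma emb_injective (n m : ℕ) :
    Function.Injective (fun q : Fin n × Fin m => (q.1.castSucc, q.2.castSucc)) := by
  intro p q h
  simp only [Prod.mk.injEq, Fin.castSucc_inj] at h
  exact Prod.ext h.1 h.2

lemma cost_dropM_le {n m : ℕ} (P Q : ℕ → Pt) (M : MMatch (n + 1) (m + 1)) :
    cost n m P Q (dropM M) ≤ cost (n + 1) (m + 1) P Q M := by
  classical
  set T := M.pairs.filter (fun p => (p.1 : ℕ) < n ∧ (p.2 : ℕ) < m) with hT
  -- the complement of T inside M.pairs has at most one element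
  have hsdiff : (M.pairs \ T).card ≤ 1 := by
    refine Finset.card_le_one.2 ?_
    intro p hp q hq
    simp only [Finset.mem_sdiff, hT, Finset.mem_filter, not_and] at hp hq
    obtain ⟨hpM, hp'⟩ := hp
    obtain ⟨hqM, hq'⟩ := hq
    have hp1 : (p.1 : ℕ) ≤ n := Nat.lt_succ_iff.1 p.1.isLt
    have hp2 : (p.2 : ℕ) ≤ m := Nat.lt_succ_iff.1 p.2.isLt
    have hq1 : (q.1 : ℕ) ≤ n := Nat.lt_succ_iff.1 q.1.isLt
    have hq2 : (q.2 : ℕ) ≤ m := Nat.lt_succ_iff.1 q.2.isLt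
    have hpc : (p.1 : ℕ) = n ∨ (p.2 : ℕ) = m := by
      by_contra h
      push_neg at h
      exact absurd (hp' hpM (by omega)) (by omega)
    have hqc : (q.1 : ℕ) = n ∨ (q.2 : ℕ) = m := by
      by_contra h
      push_neg at h
      exact absurd (hq' hqM (by omega)) (by omega)
    rcases hpc with hpc | hpc <;> rcases hqc with hqc | hqc
    · exact M.inj1 p hpM q hqM (Fin.ext (hpc.trans hqc.symm))
    · by_cases h2 : (p.2 : ℕ) = m
      · exact M.inj2 p hpM q hqM (Fin.ext (h2.trans hqc.symm))
      · by_cases h1 : (q.1 : ℕ) = n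
        · exact M.inj1 p hpM q hqM (Fin.ext (hpc.trans h1.symm))
        · exfalso
          have hlt : q.1 < p.1 := by
            rw [Fin.lt_def]; omega
          have := (M.mono q hqM p hpM).1 hlt
          rw [Fin.lt_def] at this; omega
    · by_cases h2 : (q.2 : ℕ) = m
      · exact M.inj2 p hpM q hqM (Fin.ext (hpc.trans h2.symm))
      · by_cases h1 : (p.1 : ℕ) = n
        · exact M.inj1 p hpM q hqM (Fin.ext (h1.trans hqc.symm))
        · exfalso
          have hlt : p.1 < q.1 := by
            rw [Fin.lt_def]; omega
          have := (M.mono p hpM q hqM).1 hlt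
          rw [Fin.lt_def] at this; omega
    · exact M.inj2 p hpM q hqM (Fin.ext (hpc.trans hqc.symm))
  have hTsub : T ⊆ M.pairs := Finset.filter_subset _ _
  have hcardT : (dropM M).pairs.card = T.card := by
    rw [hT, ← dropM_image M, Finset.card_image_of_injective _ (emb_injective n m)]
  have hcard_ge : M.pairs.card ≤ T.card + 1 := by
    have := Finset.card_sdiff_add_card_eq_card hTsub
    omega
  -- sums
  have hsum : (∑ p ∈ (dropM M).pairs, dist (P p.1) (Q p.2)) =
      (∑ p ∈ T, dist (P p.1) (Q p.2)) := by
    rw [hT, ← dropM_image M, Finset.sum_image (fun a _ b _ h => emb_injective n m h)]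
    rfl
  have hsum_le : (∑ p ∈ T, dist (P p.1) (Q p.2)) ≤
      (∑ p ∈ M.pairs, dist (P p.1) (Q p.2)) :=
    Finset.sum_le_sum_of_subset_of_nonneg hTsub (fun _ _ _ => dist_nonneg)
  -- gap counts
  have hgap : gapCount (dropM M) ≤ gapCount M := by
    have h1 : (dropM M).pairs.card ≤ n := card_le_fst _
    have h2 : (dropM M).pairs.card ≤ m := card_le_snd _
    simp only [gapCount]
    omega
  have hgapR : (gapCount (dropM M) : ℝ) ≤ (gapCount M : ℝ) := by
    exact_mod_cast hgap
  simp only [cost, hsum]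
  linarith

lemma GED_le_succ (n m : ℕ) (P Q : ℕ → Pt) :
    GED n m P Q ≤ GED (n + 1) (m + 1) P Q := by
  refine le_csInf (GED_set_nonempty (n + 1) (m + 1) P Q) ?_
  rintro c ⟨M, rfl⟩
  calc GED n m P Q ≤ cost n m P Q (dropM M) :=
        csInf_le (GED_set_bddBelow n m P Q) ⟨dropM M, rfl⟩
    _ ≤ cost (n + 1) (m + 1) P Q M := cost_dropM_le P Q M

lemma GED_succ_le (n m : ℕ) (P Q : ℕ → Pt) :
    GED (n + 1) (m + 1) P Q ≤ GED n m P Q + 2 := by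
  have key : ∀ c ∈ {c | ∃ M : MMatch n m, c = cost n m P Q M},
      GED (n + 1) (m + 1) P Q - 2 ≤ c := by
    rintro c ⟨M, rfl⟩
    have hle : GED (n + 1) (m + 1) P Q ≤ cost (n + 1) (m + 1) P Q (liftM M) :=
      csInf_le (GED_set_bddBelow (n + 1) (m + 1) P Q) ⟨liftM M, rfl⟩
    rw [cost_liftM] at hle
    linarith
  have := le_csInf (GED_set_nonempty n m P Q) key
  have hGED : GED n m P Q = sInf {c | ∃ M : MMatch n m, c = cost n m P Q M} := rfl
  rw [hGED]
  linarith

end GEDaux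

/-- For point sequences `P`, `Q` of lengths `n`, `m` in the plane, the geometric edit distance
`D′(i, j) = GED(P_i, Q_j)` between prefixes satisfies `0 ≤ D′(i, j) − D′(i−1, j−1) ≤ 2` for
all `1 ≤ i ≤ n`, `1 ≤ j ≤ m`; in particular the values along each diagonal of the dynamic
programming matrix are non-decreasing. -/
theorem GED_diag_step (n m : ℕ) (P Q : ℕ → Pt) :
    ∀ i j, 1 ≤ i → i ≤ n → 1 ≤ j → j ≤ m →
      0 ≤ GED i j P Q - GED (i - 1) (j - 1) P Q ∧
      GED i j P Q - GED (i - 1) (j - 1) P Q ≤ 2 := by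
  intro i j hi _ hj _
  obtain ⟨a, rfl⟩ : ∃ a, i = a + 1 := ⟨i - 1, by omega⟩
  obtain ⟨b, rfl⟩ : ∃ b, j = b + 1 := ⟨j - 1, by omega⟩
  have h1 := GEDaux.GED_le_succ a b P Q
  have h2 := GEDaux.GED_succ_le a b P Q
  simp only [Nat.add_sub_cancel]
  constructor <;> linarith
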